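/- If |β| ≤ 1, then x = 1/2 is the unique fixed point of f_β(x) = 1/(1 + exp(−2β(2x−1))) in [0,1]. -/

import Mathlib

noncomputable def f (β x : ℝ) : ℝ := 1 / (1 + Real.exp (-2*β*(2*x-1)))

private lemma Fderiv (t : ℝ) :
    HasDerivAt (fun t : ℝ => (1+t)*Real.exp (-t) - (1-t)*Real.exp t)
      (t * Real.exp t - t * Real.exp (-t)) t := by
  have h1 : HasDerivAt (fun t : ℝ => 1 + t) 1 t := (hasDerivAt_id t).const_add 1
  have h2 : HasDerivAt (fun t : ℝ => Real.exp (-t)) (Real.exp (-t) * (-1)) t :=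
    (hasDerivAt_neg t).exp
  have h3 : HasDerivAt (fun t : ℝ => 1 - t) (-1) t := (hasDerivAt_id t).const_sub 1
  have h4 : HasDerivAt Real.exp (Real.exp t) t := Real.hasDerivAt_exp t
  have := (h1.mul h2).sub (h3.mul h4)
  refine this.congr_deriv ?_
  ring

private lemma Fpos {t : ℝ} (ht : 0 < t) :
    (1-t)*Real.exp t < (1+t)*Real.exp (-t) := by
  have hmono : StrictMonoOn (fun t : ℝ => (1+t)*Real.exp (-t) - (1-t)*Real.exp t)
      (Set.Ici 0) := by
    apply strictMonoOn_of_deriv_pos (convex_Ici 0)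
    · fun_prop
    · intro x hx
      rw [interior_Ici] at hx
      rw [(Fderiv x).deriv]
      have h1 : Real.exp (-x) < Real.exp x := Real.exp_lt_exp.mpr (by linarith [hx.out])
      have h2 : (0:ℝ) < x := hx.out
      nlinarith
  have h0 := hmono (Set.self_mem_Ici) (Set.mem_Ici.mpr ht.le) ht
  simp only [Real.exp_zero, neg_zero] at h0
  nlinarith

private lemma key {t : ℝ} (ht : 0 < t) : 1 - t < (1+t) * Real.exp (-(2*t)) := by
  have h := Fpos ht
  have e1 : Real.exp (-(2*t)) * Real.exp t = Real.exp (-t) := by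
    rw [← Real.exp_add]; ring_nf
  have e2 : Real.exp (-t) * Real.exp t = 1 := by
    rw [← Real.exp_add]; simp
  have p1 := Real.exp_pos t
  have p2 := Real.exp_pos (-t)
  nlinarith [Real.exp_pos (-(2*t))]

theorem stmt5 (β : ℝ) (hβ : |β| ≤ 1) :
    ∀ x ∈ Set.Icc (0:ℝ) 1, (f β x = x ↔ x = 1/2) := by
  have hβ1 : β ≤ 1 := (abs_le.mp hβ).2
  intro x hx
  constructor
  · intro hfx
    by_contra hne
    set E := Real.exp (-2*β*(2*x-1)) with hE
    have hEpos : 0 < E := Real.exp_pos _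
    have hd : 0 < 1 + E := by linarith
    have heq1 : 1 = x * (1 + E) := by
      have : 1 / (1 + E) = x := hfx
      field_simp at this
      linarith
    set t := 2*x - 1 with ht
    have hxt : x = (t+1)/2 := by rw [ht]; ring
    have heq : (1+t) * E = 1 - t := by nlinarith
    have hEt : E = Real.exp (-(2*(β*t))) := by rw [hE]; ring_nf
    have htne : t ≠ 0 := by
      intro h0
      apply hne
      rw [hxt, h0]; norm_num
    rcases lt_or_gt_of_ne htne with hneg | hpos
    · -- t < 0 : βt ≥ t, so E ≤ exp(-2t)
      have hx0 : 0 < x := by nlinarith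
      have ht1 : -1 < t := by rw [ht]; linarith
      have hbt : t ≤ β*t := by nlinarith
      have hEle : E ≤ Real.exp (-(2*t)) := by
        rw [hEt]; exact Real.exp_le_exp.mpr (by linarith)
      have hk := key (t := -t) (by linarith)
      have e2 : Real.exp (-(2*(-t))) * Real.exp (-(2*t)) = 1 := by
        rw [← Real.exp_add]; ring_nf; exact Real.exp_zero
      have p := Real.exp_pos (-(2*t))
      -- hk : 1 + t < (1 - t) * exp(2t), so (1+t)*exp(-2t) < 1-t
      nlinarith [Real.exp_pos (-(2*(-t)))]
    · -- t > 0 : βt ≤ t, so E ≥ exp(-2t)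
      have hbt : β*t ≤ t := by nlinarith
      have hEge : Real.exp (-(2*t)) ≤ E := by
        rw [hEt]; exact Real.exp_le_exp.mpr (by linarith)
      have hk := key hpos
      nlinarith [Real.exp_pos (-(2*t))]
  · intro h
    rw [h]
    simp [f]
    norm_num
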